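/- Let T be a quantum channel on M_d with Jamiolkowski state τ := C(T)/d, where C(T) is the Choi matrix of T. Then det T is real, tr(τ²) is real, and det T ≤ (tr τ²)^{d²/2}. -/

import Mathlib

open Matrix
open scoped Kronecker ComplexOrder

noncomputable section

/-- `Mat d` is the space `M_d` of `d × d` complex matrices. -/
abbrev Mat (d : ℕ) := Matrix (Fin d) (Fin d) ℂ

/-- The Choi matrix `C(T) = Σ_{i,j} E_{ij} ⊗ T(E_{ij})` of a linear map on `M_d`. -/
def choi {d : ℕ} (T : Mat d →ₗ[ℂ] Mat d) :
    Matrix (Fin d × Fin d) (Fin d × Fin d) ℂ :=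
  ∑ i : Fin d, ∑ j : Fin d,
    (single i j (1 : ℂ)) ⊗ₖ T (single i j (1 : ℂ))

/-- A linear map on `M_d` is trace-preserving if it preserves the trace. -/
def IsTracePreserving {d : ℕ} (T : Mat d →ₗ[ℂ] Mat d) : Prop :=
  ∀ A : Mat d, (T A).trace = A.trace

/-- A linear map on `M_d` is completely positive if its Choi matrix is positive
semidefinite. -/
def IsCompletelyPositive {d : ℕ} (T : Mat d →ₗ[ℂ] Mat d) : Prop :=
  (choi T).PosSemidef

/-- A quantum channel is a completely positive trace-preserving linear map. -/
def IsChannel {d : ℕ} (T : Mat d →ₗ[ℂ] Mat d) : Prop :=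
  IsTracePreserving T ∧ IsCompletelyPositive T

section Aux
variable {d : ℕ}

lemma choi_apply (T : Mat d →ₗ[ℂ] Mat d) (i k j l : Fin d) :
    choi T (i, k) (j, l) = T (single i j 1) k l := by
  classical
  simp only [choi, Matrix.sum_apply, Matrix.kroneckerMap_apply]
  rw [Finset.sum_eq_single i]
  · rw [Finset.sum_eq_single j]
    · simp
    · intro b _ hb; simp [Matrix.single, hb]
    · simp
  · intro a _ ha
    apply Finset.sum_eq_zero; intro b _; simp [Matrix.single, ha]
  · simp

lemma stdBasis_repr (A : Mat d) (k l : Fin d) :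
    (Matrix.stdBasis ℂ (Fin d) (Fin d)).repr A (k, l) = A k l := by
  classical
  have hA : A = ∑ p : Fin d × Fin d, A p.1 p.2 • Matrix.stdBasis ℂ (Fin d) (Fin d) p := by
    rw [show (Finset.univ : Finset (Fin d × Fin d)) = Finset.univ ×ˢ Finset.univ from
      Finset.univ_product_univ.symm, Finset.sum_product]
    conv_lhs => rw [matrix_eq_sum_single A]
    refine Finset.sum_congr rfl fun i _ => Finset.sum_congr rfl fun j _ => ?_
    rw [Matrix.stdBasis_eq_single, smul_single, smul_eq_mul, mul_one]
  conv_lhs => rw [hA]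
  rw [map_sum, Finset.sum_apply']
  rw [Finset.sum_eq_single ((k, l) : Fin d × Fin d)]
  · rw [_root_.map_smul, Module.Basis.repr_self]; simp
  · intro p _ hp
    rw [_root_.map_smul, Module.Basis.repr_self]
    simp [Finsupp.single_apply, hp]
  · simp

lemma toMatrix_stdBasis_apply (T : Mat d →ₗ[ℂ] Mat d) (k l i j : Fin d) :
    LinearMap.toMatrix (Matrix.stdBasis ℂ (Fin d) (Fin d))
      (Matrix.stdBasis ℂ (Fin d) (Fin d)) T (k, l) (i, j)
      = T (single i j 1) k l := by
  rw [LinearMap.toMatrix_apply, Matrix.stdBasis_eq_single, stdBasis_repr]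

lemma trace_eq_sum_eigenvalues' {m : Type*} [Fintype m] [DecidableEq m]
    {A : Matrix m m ℂ} (hA : A.IsHermitian) :
    A.trace = ∑ i, (hA.eigenvalues i : ℂ) := by
  exact hA.trace_eq_sum_eigenvalues

end Aux

/-- for a quantum channel `T` on `M_d` with Jamiolkowski state
`τ = C(T)/d`, the determinant of `T` and `tr(τ²)` are real and
`det T ≤ (tr τ²)^(d²/2)`. -/
theorem det_le_purity_pow {d : ℕ} (T : Mat d →ₗ[ℂ] Mat d) (hT : IsChannel T) :
    ∃ r s : ℝ, LinearMap.det T = (r : ℂ) ∧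
      (((d : ℂ)⁻¹ • choi T) * ((d : ℂ)⁻¹ • choi T)).trace = (s : ℂ) ∧
      r ≤ s ^ (((d : ℝ) ^ 2) / 2) := by
  classical
  obtain ⟨-, hCP⟩ := hT
  set b := Matrix.stdBasis ℂ (Fin d) (Fin d) with hb
  set M := LinearMap.toMatrix b b T with hMdef
  have hdet : LinearMap.det T = M.det := (LinearMap.det_toMatrix b T).symm
  have hherm : (choi T).IsHermitian := hCP.1
  have hMentry : ∀ k l i j : Fin d, M (k, l) (i, j) = choi T (i, k) (j, l) := by
    intro k l i j
    rw [hMdef, hb, toMatrix_stdBasis_apply, choi_apply]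
  have hconj : ∀ k l i j : Fin d, M (l, k) (j, i) = star (M (k, l) (i, j)) := by
    intro k l i j
    rw [hMentry, hMentry]
    exact (hherm.apply (j, l) (i, k)).symm
  -- determinant is real
  have hswap : M = (M.submatrix (Equiv.prodComm (Fin d) (Fin d))
      (Equiv.prodComm (Fin d) (Fin d))).map (starRingEnd ℂ) := by
    ext ⟨k, l⟩ ⟨i, j⟩
    simp only [Matrix.map_apply, Matrix.submatrix_apply, Equiv.prodComm_apply, Prod.swap_prod_mk,
      starRingEnd_apply]
    exact hconj l k j i
  have hdetstar : M.det = star M.det := by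
    conv_lhs => rw [hswap]
    rw [← RingHom.mapMatrix_apply, ← RingHom.map_det, Matrix.det_submatrix_equiv_self]
    rfl
  obtain ⟨r, hr⟩ : ∃ r : ℝ, M.det = (r : ℂ) :=
    ⟨M.det.re, (Complex.conj_eq_iff_re.mp hdetstar.symm).symm⟩
  -- positive semidefinite N
  set N := Mᴴ * M with hNdef
  have hN : N.PosSemidef := Matrix.posSemidef_conjTranspose_mul_self M
  set lam := hN.1.eigenvalues with hlam
  have hlamnn : ∀ p, 0 ≤ lam p := hN.eigenvalues_nonneg
  have hdetN : N.det = ∏ p, (lam p : ℂ) := hN.1.det_eq_prod_eigenvalues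
  have htrN : N.trace = ∑ p, (lam p : ℂ) := trace_eq_sum_eigenvalues' hN.1
  -- r * r = prod of eigenvalues
  have hrr : r * r = ∏ p, lam p := by
    have h1 : N.det = ((r * r : ℝ) : ℂ) := by
      rw [hNdef, Matrix.det_mul, Matrix.det_conjTranspose, hr, Complex.star_def,
        Complex.conj_ofReal]
      push_cast
      ring
    rw [h1] at hdetN
    exact_mod_cast hdetN
  -- trace of choi squared
  have htrC : (choi T * choi T).trace = N.trace := by
    have e1 : (choi T * choi T).trace
        = ∑ i : Fin d, ∑ k : Fin d, ∑ j : Fin d, ∑ l : Fin d,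
            M (k, l) (i, j) * star (M (k, l) (i, j)) := by
      rw [Matrix.trace]
      simp only [Matrix.diag_apply, Matrix.mul_apply]
      rw [Fintype.sum_prod_type]
      refine Finset.sum_congr rfl fun i _ => Finset.sum_congr rfl fun k _ => ?_
      rw [Fintype.sum_prod_type]
      refine Finset.sum_congr rfl fun j _ => Finset.sum_congr rfl fun l _ => ?_
      rw [hMentry k l i j, hherm.apply (j, l) (i, k)]
    have e2 : N.trace
        = ∑ i : Fin d, ∑ j : Fin d, ∑ k : Fin d, ∑ l : Fin d,
            M (k, l) (i, j) * star (M (k, l) (i, j)) := by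
      rw [Matrix.trace]
      simp only [Matrix.diag_apply, hNdef, Matrix.mul_apply, Matrix.conjTranspose_apply]
      rw [Fintype.sum_prod_type]
      refine Finset.sum_congr rfl fun i _ => Finset.sum_congr rfl fun j _ => ?_
      rw [Fintype.sum_prod_type]
      refine Finset.sum_congr rfl fun k _ => Finset.sum_congr rfl fun l _ => ?_
      exact mul_comm _ _
    rw [e1, e2]
    refine Finset.sum_congr rfl fun i _ => ?_
    exact Finset.sum_comm
  set s : ℝ := ((d : ℝ) * (d : ℝ))⁻¹ * ∑ p, lam p with hs
  have hsnn : 0 ≤ s :=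
    mul_nonneg (inv_nonneg.mpr (by positivity)) (Finset.sum_nonneg fun p _ => hlamnn p)
  have htau : (((d : ℂ)⁻¹ • choi T) * ((d : ℂ)⁻¹ • choi T)).trace = (s : ℂ) := by
    rw [Matrix.smul_mul, Matrix.mul_smul, Matrix.trace_smul, Matrix.trace_smul,
      htrC, htrN, smul_eq_mul, smul_eq_mul, hs]
    push_cast
    ring
  -- AM-GM
  have hn : Fintype.card (Fin d × Fin d) = d * d := by simp
  have hle : r * r ≤ s ^ (d * d) := by
    rcases Nat.eq_zero_or_pos d with hd | hd
    · subst hd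
      rw [hrr]
      simp
    · have hdd : (0 : ℝ) < (d : ℝ) * (d : ℝ) := by positivity
      have hcard : ((d * d : ℕ) : ℝ) = (d : ℝ) * (d : ℝ) := by push_cast; ring
      have hw : ∑ _p : Fin d × Fin d, ((d : ℝ) * (d : ℝ))⁻¹ = 1 := by
        rw [Finset.sum_const, Finset.card_univ, hn, nsmul_eq_mul, hcard,
          mul_inv_cancel₀ hdd.ne']
      have hgm := Real.geom_mean_le_arith_mean_weighted Finset.univ
        (fun _ => ((d : ℝ) * (d : ℝ))⁻¹) lam (fun _ _ => by positivity) hw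
        (fun p _ => hlamnn p)
      have hsum : ∑ p, ((d : ℝ) * (d : ℝ))⁻¹ * lam p = s := by
        rw [hs, Finset.mul_sum]
      rw [hsum] at hgm
      have hprod : ∏ p, lam p
          = (∏ p, lam p ^ (((d : ℝ) * (d : ℝ))⁻¹)) ^ (d * d) := by
        rw [← Finset.prod_pow]
        refine Finset.prod_congr rfl fun p _ => ?_
        rw [← Real.rpow_natCast (lam p ^ (((d : ℝ) * (d : ℝ))⁻¹)) (d * d),
          ← Real.rpow_mul (hlamnn p), hcard, inv_mul_cancel₀ hdd.ne', Real.rpow_one]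
      rw [hrr, hprod]
      exact pow_le_pow_left₀ (Finset.prod_nonneg fun p _ => Real.rpow_nonneg (hlamnn p) _)
        hgm (d * d)
  refine ⟨r, s, by rw [hdet, hr], htau, ?_⟩
  have h3 : s ^ (((d : ℝ) ^ 2) / 2) = Real.sqrt (s ^ (d * d)) := by
    rw [Real.sqrt_eq_rpow, ← Real.rpow_natCast s (d * d), ← Real.rpow_mul hsnn]
    congr 1
    push_cast
    ring
  calc r ≤ |r| := le_abs_self r
    _ = Real.sqrt (r * r) := (Real.sqrt_mul_self_eq_abs r).symm
    _ ≤ Real.sqrt (s ^ (d * d)) := Real.sqrt_le_sqrt hle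
    _ = s ^ (((d : ℝ) ^ 2) / 2) := h3.symm
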